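/- For any m and k with 0 < k < m, consider the vote distribution x putting mass 1/(k+1) on each singleton {c} for c in a fixed set B ⊆ C with |B| = k+1, and 0 elsewhere. Then for every k-committee W, the maximum over nonempty deviations W' with |W'| ≤ k of (∑_{A : |A∩W'| > |A∩W|} x[A]) − |W'|/k is at least −1/(k(k+1)). Consequently the optimal value of the max-min-max problem is at least −1/(k(k+1)). -/

import Mathlib

/-- the distribution putting mass `1/(k+1)` on each singleton of a
fixed `(k+1)`-set `B` gives every `k`-committee a deviation of excess support
at least `-1/(k(k+1))`. -/
theorem stmt3 {C : Type*} [Fintype C] [DecidableEq C] (m k : ℕ)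
    (hm : Fintype.card C = m) (hk : 0 < k) (hkm : k < m)
    (B : Finset C) (hB : B.card = k + 1)
    (x : Finset C → ℚ)
    (hx : ∀ A : Finset C, x A = if A.card = 1 ∧ A ⊆ B then 1 / ((k : ℚ) + 1) else 0) :
    ∀ W : Finset C, W.card = k →
      ∃ W' : Finset C, W'.Nonempty ∧ W'.card ≤ k ∧
        -(1 / ((k : ℚ) * ((k : ℚ) + 1))) ≤
          (∑ A ∈ Finset.univ.filter (fun A : Finset C => (A ∩ W).card < (A ∩ W').card), x A)
            - (W'.card : ℚ) / k := by
  intro W hW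
  obtain ⟨c, hcB, hcW⟩ : ∃ c ∈ B, c ∉ W := by
    have : (B \ W).Nonempty := by
      rw [← Finset.card_pos]
      have := Finset.le_card_sdiff W B
      omega
    obtain ⟨c, hc⟩ := this
    rw [Finset.mem_sdiff] at hc
    exact ⟨c, hc.1, hc.2⟩
  refine ⟨{c}, Finset.singleton_nonempty c, by simp; omega, ?_⟩
  have hsum : (∑ A ∈ Finset.univ.filter
      (fun A : Finset C => (A ∩ W).card < (A ∩ ({c} : Finset C)).card), x A)
      = 1 / ((k : ℚ) + 1) := by
    rw [Finset.sum_eq_single_of_mem ({c} : Finset C)]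
    · rw [hx]
      simp [hcB]
    · simp [Finset.mem_filter, Finset.singleton_inter_of_notMem hcW]
    · intro A hA hne
      rw [hx]
      rw [Finset.mem_filter] at hA
      split_ifs with h
      · exfalso
        obtain ⟨a, ha⟩ := Finset.card_eq_one.mp h.1
        subst ha
        have h2 := hA.2
        have : ({a} ∩ ({c} : Finset C)).card ≤ 1 := by
          apply le_trans (Finset.card_le_card (Finset.inter_subset_right))
          simp
        have h3 : ({a} ∩ ({c} : Finset C)).card = 1 := by omega
        have : a = c := by
          by_contra hac
          rw [Finset.singleton_inter_of_notMem (by simpa using hac)] at h3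
          simp at h3
        exact hne (by rw [this])
      · rfl
  rw [hsum]
  have hk0 : (k : ℚ) ≠ 0 := Nat.cast_ne_zero.mpr hk.ne'
  have hk1 : (k : ℚ) + 1 ≠ 0 := by positivity
  simp only [Finset.card_singleton, Nat.cast_one]
  rw [div_sub_div _ _ hk1 hk0, neg_le, ← neg_div, div_le_div_iff₀ (by positivity) (by positivity)]
  ring_nf
  nlinarith [sq_nonneg ((k:ℚ))]
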